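/- Let 𝒯 = (Σ, ℰ) be a 𝒱-enriched 𝒮-sorted equational theory with underlying classical 𝒮-sorted equational theory |𝒯| = (|Σ|, |ℰ|). Then U^𝒯 : 𝒯-Alg → 𝒱^𝒮 has a left adjoint F^𝒯 : 𝒱^𝒮 → 𝒯-Alg, and the adjunction F^𝒯 ⊣ U^𝒯 is a lifting of the adjunction F^{|𝒯|} ⊣ U^{|𝒯|} : |𝒯|-Alg → Set^𝒮; in particular |-|^𝒯 ∘ F^𝒯 = F^{|𝒯|} ∘ |-|^𝒮 strictly. For each 𝒮-sorted object X of 𝒱, the free 𝒯-algebra F^𝒯 X is the domain of the initial lift of the |-|^𝒯-structured source (f^♯ : F^{|𝒯|}|X| → |A|^𝒯) indexed by all pairs (A, f : X → U^𝒯 A) with A a 𝒯-algebra; in particular the carrier U^𝒯 F^𝒯 X is the domain of the initial lift of the |-|^𝒮-structured source (f^♯ : Term_{|Σ|}(|X|)/∼^{|ℰ|} → |A|^𝒮), where ∼^{|ℰ|} is the |Σ|-congruence on F^{|Σ|}(|X|) generated by |ℰ|. -/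

import Mathlib

universe u

/-- A topological construct over `Set`: an amnestic concrete category over types,
presented by a class of structures on each type together with an admissibility
predicate on functions, in which every structured source has an initial lift and
every structured sink has a final lift (index types in `Type (u+1)` suffice for
all the "large" sources/sinks we consider). -/
structure TopConstruct : Type (u + 2) where
  Str : Type u → Type (u + 1)
  Adm : ∀ {X Y : Type u}, Str X → Str Y → (X → Y) → Prop
  adm_id : ∀ {X : Type u} (s : Str X), Adm s s id
  adm_comp : ∀ {X Y Z : Type u} {s : Str X} {t : Str Y} {r : Str Z} {f : X → Y} {g : Y → Z},
    Adm s t f → Adm t r g → Adm s r (g ∘ f)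
  amnestic : ∀ {X : Type u} (s t : Str X), Adm s t id → Adm t s id → s = t
  iLift : ∀ {X : Type u} {I : Type (u + 1)} (T : I → Type u) (t : ∀ i, Str (T i))
    (f : ∀ i, X → T i), Str X
  iLift_adm : ∀ {X : Type u} {I : Type (u + 1)} (T : I → Type u) (t : ∀ i, Str (T i))
    (f : ∀ i, X → T i) (i : I), Adm (iLift T t f) (t i) (f i)
  iLift_initial : ∀ {X : Type u} {I : Type (u + 1)} (T : I → Type u) (t : ∀ i, Str (T i))
    (f : ∀ i, X → T i) {W : Type u} (w : Str W) (g : W → X),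
    (∀ i, Adm w (t i) (fun x => f i (g x))) → Adm w (iLift T t f) g
  fLift : ∀ {X : Type u} {I : Type (u + 1)} (T : I → Type u) (t : ∀ i, Str (T i))
    (f : ∀ i, T i → X), Str X
  fLift_adm : ∀ {X : Type u} {I : Type (u + 1)} (T : I → Type u) (t : ∀ i, Str (T i))
    (f : ∀ i, T i → X) (i : I), Adm (t i) (fLift T t f) (f i)
  fLift_final : ∀ {X : Type u} {I : Type (u + 1)} (T : I → Type u) (t : ∀ i, Str (T i))
    (f : ∀ i, T i → X) {W : Type u} (w : Str W) (g : X → W),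
    (∀ i, Adm (t i) w (fun x => g (f i x))) → Adm (fLift T t f) w g

namespace TopConstruct

variable (V : TopConstruct.{u})

/-- The objects of the topological category `V`. -/
def Obj : Type (u + 1) := Σ X : Type u, V.Str X

/-- The fibre (partial) order over a fixed underlying set. -/
def fibLe {X : Type u} (s t : V.Str X) : Prop := V.Adm s t id

/-- Infima in the fibres (initial lift of a structured source of identities). -/
def fibInf {X : Type u} {I : Type (u + 1)} (s : I → V.Str X) : V.Str X :=
  V.iLift (fun _ => X) s fun _ => id

/-- Suprema in the fibres (final lift of a structured sink of identities). -/
def fibSup {X : Type u} {I : Type (u + 1)} (s : I → V.Str X) : V.Str X :=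
  V.fLift (fun _ => X) s fun _ => id

/-- Binary suprema in the fibres. -/
def fibSup2 {X : Type u} (s t : V.Str X) : V.Str X :=
  V.fibSup fun b : ULift.{u + 1} Bool => bif b.down then s else t

/-- Initial lift of a single structured map. -/
def iLift1 {X Y : Type u} (t : V.Str Y) (f : X → Y) : V.Str X :=
  V.iLift (I := PUnit.{u + 2}) (fun _ => Y) (fun _ => t) fun _ => f

/-- Final lift of a single structured map. -/
def fLift1 {X Y : Type u} (t : V.Str X) (f : X → Y) : V.Str Y :=
  V.fLift (I := PUnit.{u + 2}) (fun _ => X) (fun _ => t) fun _ => f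

/-- The indiscrete structure (top of the fibre). -/
def indisc (X : Type u) : V.Str X :=
  V.iLift (I := PEmpty.{u + 2}) (fun e => e.elim) (fun e => e.elim) fun e => e.elim

/-- The discrete structure (bottom of the fibre). -/
def disc (X : Type u) : V.Str X :=
  V.fLift (I := PEmpty.{u + 2}) (fun e => e.elim) (fun e => e.elim) fun e => e.elim

/-- The product structure on a finitely-indexed (or any `Type 0`-indexed) family. -/
def piStrF {I : Type} {T : I → Type u} (t : ∀ i, V.Str (T i)) : V.Str (∀ i, T i) :=
  V.iLift (I := ULift.{u + 1} I) (fun i => T i.down) (fun i => t i.down) fun i g => g i.down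

/-- The product structure on a `Type u`-indexed family. -/
def piStrU {I : Type u} {T : I → Type u} (t : ∀ i, V.Str (T i)) : V.Str (∀ i, T i) :=
  V.iLift (I := ULift.{u + 1} I) (fun i => T i.down) (fun i => t i.down) fun i g => g i.down

/-- The binary (cartesian) product structure. -/
def prodStr {X Y : Type u} (s : V.Str X) (t : V.Str Y) : V.Str (X × Y) :=
  V.iLift (I := ULift.{u + 1} Bool) (fun b => Bool.rec Y X b.down)
    (fun b => Bool.rec (motive := fun c => V.Str (Bool.rec Y X c)) t s b.down)
    (fun b => Bool.rec (motive := fun c => X × Y → Bool.rec Y X c) Prod.snd Prod.fst b.down)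

end TopConstruct

/-- Cartesian closedness of a topological construct, witnessed concretely:
each hom-set carries an exponential structure for which admissibility of a map
into the exponential is equivalent to admissibility of its uncurrying. -/
structure CartesianClosed (V : TopConstruct.{u}) : Type (u + 1) where
  exp : ∀ {X Y : Type u} (s : V.Str X) (t : V.Str Y), V.Str {f : X → Y // V.Adm s t f}
  adm_curry_iff : ∀ {X Y Z : Type u} (s : V.Str X) (t : V.Str Y) (c : V.Str Z)
    (g : Z → {f : X → Y // V.Adm s t f}),
    V.Adm c (exp s t) g ↔ V.Adm (V.prodStr c s) t fun p => (g p.1).1 p.2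

/-- A symmetric monoidal structure on a topological construct `V` for which the
forgetful functor to `Set` is strict symmetric monoidal with respect to the
cartesian structure on `Set`. -/
structure MonStr (V : TopConstruct.{u}) : Type (u + 1) where
  tens : ∀ {X Y : Type u}, V.Str X → V.Str Y → V.Str (X × Y)
  unitStr : V.Str PUnit.{u + 1}
  tens_adm : ∀ {X X' Y Y' : Type u} {s : V.Str X} {s' : V.Str X'} {t : V.Str Y} {t' : V.Str Y'}
    {f : X → X'} {g : Y → Y'}, V.Adm s s' f → V.Adm t t' g →
    V.Adm (tens s t) (tens s' t') (Prod.map f g)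
  swap_adm : ∀ {X Y : Type u} (s : V.Str X) (t : V.Str Y), V.Adm (tens s t) (tens t s) Prod.swap
  assoc_adm : ∀ {X Y Z : Type u} (s : V.Str X) (t : V.Str Y) (r : V.Str Z),
    V.Adm (tens (tens s t) r) (tens s (tens t r)) fun p => (p.1.1, (p.1.2, p.2))
  assoc_inv_adm : ∀ {X Y Z : Type u} (s : V.Str X) (t : V.Str Y) (r : V.Str Z),
    V.Adm (tens s (tens t r)) (tens (tens s t) r) fun p => ((p.1, p.2.1), p.2.2)
  lunit_adm : ∀ {X : Type u} (s : V.Str X), V.Adm (tens unitStr s) s Prod.snd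
  lunit_inv_adm : ∀ {X : Type u} (s : V.Str X), V.Adm s (tens unitStr s) fun x => (PUnit.unit, x)
  runit_adm : ∀ {X : Type u} (s : V.Str X), V.Adm (tens s unitStr) s Prod.fst
  runit_inv_adm : ∀ {X : Type u} (s : V.Str X), V.Adm s (tens s unitStr) fun x => (x, PUnit.unit)

/-- The statement that the symmetric monoidal structure `M` is the cartesian one. -/
def MonStr.IsCartesian {V : TopConstruct.{u}} (M : MonStr V) : Prop :=
  (∀ {X Y : Type u} (s : V.Str X) (t : V.Str Y), M.tens s t = V.prodStr s t) ∧
    M.unitStr = V.indisc PUnit.{u + 1}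
universe v

/-- A classical `S`-sorted signature. -/
structure ClassSig (S : Type u) : Type (u + 1) where
  Op : Type u
  ar : Op → List S
  out : Op → S

/-- A classical `S`-sorted algebra (in `Set`) for a classical signature. -/
structure ClassAlg {S : Type u} (Sg : ClassSig S) : Type (u + 1) where
  car : S → Type u
  op : ∀ σ : Sg.Op, (∀ i : Fin (Sg.ar σ).length, car ((Sg.ar σ).get i)) → car (Sg.out σ)

/-- A morphism of classical algebras. -/
def IsClsHom {S : Type u} {Sg : ClassSig S} (A B : ClassAlg Sg)
    (h : ∀ s, A.car s → B.car s) : Prop :=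
  ∀ (σ : Sg.Op) (ts : ∀ i : Fin (Sg.ar σ).length, A.car ((Sg.ar σ).get i)),
    h _ (A.op σ ts) = B.op σ fun i => h _ (ts i)

/-- Ground terms over a classical signature with constants from `X`. -/
inductive Tm {S : Type u} (Sg : ClassSig S) (X : S → Type v) : S → Type (max u v)
  | var {s : S} : X s → Tm Sg X s
  | app (σ : Sg.Op) (ts : ∀ i : Fin (Sg.ar σ).length, Tm Sg X ((Sg.ar σ).get i)) :
      Tm Sg X (Sg.out σ)

/-- The term algebra (the free classical algebra) on an `S`-sorted set. -/
def termAlg {S : Type u} (Sg : ClassSig S) (X : S → Type u) : ClassAlg Sg :=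
  ⟨Tm Sg X, fun σ ts => .app σ ts⟩

/-- The unique extension of `f` to a homomorphism out of the term algebra
(the adjoint transpose `f^♯`). -/
def Tm.extend {S : Type u} {Sg : ClassSig S} {X : S → Type v} (B : ClassAlg Sg)
    (f : ∀ s, X s → B.car s) : ∀ {s : S}, Tm Sg X s → B.car s
  | _, .var x => f _ x
  | _, .app σ ts => B.op σ fun i => Tm.extend B f (ts i)

/-- Variables of a context: positions of the context list of the given sort. -/
def CtxVar {S : Type u} (Γ : List S) (s : S) : Type := {i : Fin Γ.length // Γ.get i = s}

/-- A syntactic equation in context over a classical signature. -/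
structure SynEq {S : Type u} (Sg : ClassSig S) : Type u where
  ctx : List S
  sort : S
  lhs : Tm Sg (CtxVar ctx) sort
  rhs : Tm Sg (CtxVar ctx) sort

/-- Interpretation of a term in context in a classical algebra at a valuation. -/
def ctxInterp {S : Type u} {Sg : ClassSig S} (B : ClassAlg Sg) {Γ : List S} {s : S}
    (t : Tm Sg (CtxVar Γ) s) (as : ∀ i : Fin Γ.length, B.car (Γ.get i)) : B.car s :=
  Tm.extend (X := CtxVar Γ) B (fun _ x => x.2 ▸ as x.1) t

/-- Satisfaction of a syntactic equation in context by a classical algebra. -/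
def ClsSat {S : Type u} {Sg : ClassSig S} (B : ClassAlg Sg) (e : SynEq Sg) : Prop :=
  ∀ as : ∀ i : Fin e.ctx.length, B.car (e.ctx.get i),
    ctxInterp B e.lhs as = ctxInterp B e.rhs as

/-- A congruence on a classical algebra. -/
def IsClsCong {S : Type u} {Sg : ClassSig S} (B : ClassAlg Sg)
    (r : ∀ s, B.car s → B.car s → Prop) : Prop :=
  (∀ s, Equivalence (r s)) ∧
    ∀ (σ : Sg.Op) (ts us : ∀ i : Fin (Sg.ar σ).length, B.car ((Sg.ar σ).get i)),
      (∀ i, r _ (ts i) (us i)) → r _ (B.op σ ts) (B.op σ us)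

/-- The congruence on a classical algebra generated by a set of syntactic
equations in context: the smallest congruence identifying the interpretations
of the two sides of each equation at all valuations. -/
def congGen {S : Type u} {Sg : ClassSig S} (B : ClassAlg Sg) (E : Set (SynEq Sg)) :
    ∀ s, B.car s → B.car s → Prop := fun s a b =>
  ∀ r : ∀ s, B.car s → B.car s → Prop, IsClsCong B r →
    (∀ e ∈ E, ∀ as, r e.sort (ctxInterp B e.lhs as) (ctxInterp B e.rhs as)) → r s a b

/-- A `V`-enriched `S`-sorted signature: operation symbols with input sorts,
an output sort and a parameter object of `V`. -/
structure VSig (V : TopConstruct.{u}) (S : Type u) : Type (u + 1) where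
  Op : Type u
  ar : Op → List S
  out : Op → S
  parC : Op → Type u
  parS : ∀ σ, V.Str (parC σ)

/-- The underlying classical `S`-sorted signature `|Σ|` of a `V`-enriched one:
one operation symbol `σ_p` for every `σ` and every point `p` of its parameter. -/
def VSig.toClass {V : TopConstruct.{u}} {S : Type u} (Sg : VSig V S) : ClassSig S where
  Op := Σ σ : Sg.Op, Sg.parC σ
  ar := fun σ => Sg.ar σ.1
  out := fun σ => Sg.out σ.1

/-- A `Σ`-algebra for a `V`-enriched `S`-sorted signature (relative to a
symmetric monoidal structure `M` on `V`): an `S`-sorted object of `V` equipped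
with an admissible operation `P ⊗ (A_{S₁} × ⋯ × A_{Sₙ}) → A_S` for each `σ`. -/
structure VAlg (V : TopConstruct.{u}) (M : MonStr V) {S : Type u} (Sg : VSig V S) :
    Type (u + 1) where
  car : S → Type u
  str : ∀ s, V.Str (car s)
  op : ∀ σ : Sg.Op,
    Sg.parC σ × (∀ i : Fin (Sg.ar σ).length, car ((Sg.ar σ).get i)) → car (Sg.out σ)
  op_adm : ∀ σ : Sg.Op,
    V.Adm (M.tens (Sg.parS σ) (V.piStrF fun i => str ((Sg.ar σ).get i))) (str (Sg.out σ)) (op σ)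

/-- The underlying classical `|Σ|`-algebra of a `Σ`-algebra. -/
def VAlg.cls {V : TopConstruct.{u}} {M : MonStr V} {S : Type u} {Sg : VSig V S}
    (A : VAlg V M Sg) : ClassAlg Sg.toClass :=
  ⟨A.car, fun σ ts => A.op σ.1 (σ.2, ts)⟩

/-- A morphism of `Σ`-algebras: an `S`-sorted admissible family commuting with
all the operations. -/
def IsVHom {V : TopConstruct.{u}} {M : MonStr V} {S : Type u} {Sg : VSig V S}
    (A B : VAlg V M Sg) (h : ∀ s, A.car s → B.car s) : Prop :=
  (∀ s, V.Adm (A.str s) (B.str s) (h s)) ∧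
    ∀ (σ : Sg.Op) (p : Sg.parC σ) (ts : ∀ i : Fin (Sg.ar σ).length, A.car ((Sg.ar σ).get i)),
      h _ (A.op σ (p, ts)) = B.op σ (p, fun i => h _ (ts i))
/-- The components of a candidate algebraic `Σ`-operation with input sorts
`ins`, output sort `o` and parameter carrier `P`. -/
def OpFam (V : TopConstruct.{u}) (M : MonStr V) {S : Type u} (Sg : VSig V S)
    (ins : List S) (o : S) (P : Type u) : Type (u + 1) :=
  ∀ A : VAlg V M Sg, P × (∀ i : Fin ins.length, A.car (ins.get i)) → A.car o

/-- Admissibility of all components of a candidate algebraic `Σ`-operation. -/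
def OpAdm {V : TopConstruct.{u}} {M : MonStr V} {S : Type u} {Sg : VSig V S}
    {ins : List S} {o : S} {P : Type u} (pS : V.Str P) (ω : OpFam V M Sg ins o P) : Prop :=
  ∀ A : VAlg V M Sg,
    V.Adm (M.tens pS (V.piStrF fun i => A.str (ins.get i))) (A.str o) (ω A)

/-- Naturality of a candidate algebraic `Σ`-operation. -/
def OpNat {V : TopConstruct.{u}} {M : MonStr V} {S : Type u} {Sg : VSig V S}
    {ins : List S} {o : S} {P : Type u} (ω : OpFam V M Sg ins o P) : Prop :=
  ∀ (A B : VAlg V M Sg) (h : ∀ s, A.car s → B.car s), IsVHom A B h →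
    ∀ (p : P) (ts : ∀ i : Fin ins.length, A.car (ins.get i)),
      h o (ω A (p, ts)) = ω B (p, fun i => h _ (ts i))

/-- An algebraic `Σ`-equation: a pair of algebraic `Σ`-operations
(natural transformations `P ⊗ U^{S̄} ⟹ U^S`) of the same type. -/
structure AlgEq (V : TopConstruct.{u}) (M : MonStr V) {S : Type u} (Sg : VSig V S) :
    Type (u + 1) where
  ins : List S
  out : S
  parC : Type u
  parS : V.Str parC
  lhs : OpFam V M Sg ins out parC
  rhs : OpFam V M Sg ins out parC
  lhs_adm : OpAdm parS lhs
  rhs_adm : OpAdm parS rhs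
  lhs_nat : OpNat lhs
  rhs_nat : OpNat rhs

/-- Satisfaction of an algebraic `Σ`-equation by a `Σ`-algebra. -/
def VSat {V : TopConstruct.{u}} {M : MonStr V} {S : Type u} {Sg : VSig V S}
    (A : VAlg V M Sg) (e : AlgEq V M Sg) : Prop :=
  e.lhs A = e.rhs A

/-- The indiscrete `Σ`-algebra determined by a classical `|Σ|`-algebra. -/
def indiscAlg (V : TopConstruct.{u}) (M : MonStr V) {S : Type u} (Sg : VSig V S)
    (B : ClassAlg Sg.toClass) : VAlg V M Sg where
  car := B.car
  str := fun s => V.indisc (B.car s)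
  op := fun σ pts => B.op ⟨σ, pts.1⟩ pts.2
  op_adm := fun σ => V.iLift_initial _ _ _ _ _ fun i => i.elim
/-- The carrier `Term_{|Σ|}(|X|)/∼^{|ℰ|}` of the free `|𝒯|`-algebra on `|X|`:
the quotient of the `𝒮`-sorted set of ground `|Σ|`-terms with constants from
`|X|` by the `|Σ|`-congruence on the term algebra generated by `|ℰ| = E'`. -/
def QCar (V : TopConstruct.{u}) {S : Type u} (Sg : VSig V S)
    (E' : Set (SynEq Sg.toClass)) (X : S → V.Obj) (s : S) : Type u :=
  Quot (congGen (termAlg Sg.toClass fun s => (X s).1) E' s)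
/-- The index family of the `|-|^𝒯`-structured source of all adjoint transposes
`f^♯ : F^{|𝒯|}|X| → |A|^𝒯` of pairs `(A, f : X → U^𝒯 A)` with `A` a `𝒯`-algebra. -/
def FreeTSrc (V : TopConstruct.{u}) (M : MonStr V) {S : Type u} (Sg : VSig V S)
    (E : Set (AlgEq V M Sg)) (X : S → V.Obj) : Type (u + 1) :=
  (A : {A : VAlg V M Sg // ∀ e ∈ E, VSat A e}) ×
    {f : ∀ s, (X s).1 → A.1.car s // ∀ s, V.Adm (X s).2 (A.1.str s) (f s)}

section Stmt12Aux

universe w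

variable {S : Type u} {Sg : ClassSig S}

theorem cast_apply' {F G : S → Sort*} (h : ∀ s, F s → G s) {s s' : S} (e : s = s') (a : F s) :
    h s' (e ▸ a) = e ▸ h s a := by subst e; rfl

theorem extend_extend {X : S → Type w} {Y : S → Type u} (B : ClassAlg Sg)
    (f : ∀ s, Y s → B.car s) (g : ∀ s, X s → Tm Sg Y s) :
    ∀ {s : S} (t : Tm Sg X s),
      Tm.extend B f (Tm.extend (termAlg Sg Y) g t) =
        Tm.extend B (fun s x => Tm.extend B f (g s x)) t
  | _, .var _ => rfl
  | _, .app σ ts => by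
      show B.op σ (fun i => Tm.extend B f (Tm.extend (termAlg Sg Y) g (ts i))) = B.op σ _
      exact congrArg (B.op σ) (funext fun i => extend_extend B f g (ts i))

theorem hom_extend {X : S → Type w} {B C : ClassAlg Sg} {h : ∀ s, B.car s → C.car s}
    (hh : IsClsHom B C h) (f : ∀ s, X s → B.car s) :
    ∀ {s : S} (t : Tm Sg X s),
      h s (Tm.extend B f t) = Tm.extend C (fun s x => h s (f s x)) t
  | _, .var _ => rfl
  | _, .app σ ts => by
      show h _ (B.op σ fun i => Tm.extend B f (ts i)) = C.op σ _
      rw [hh σ fun i => Tm.extend B f (ts i)]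
      exact congrArg (C.op σ) (funext fun i => hom_extend hh f (ts i))

theorem extend_ctxInterp {X : S → Type u} (B : ClassAlg Sg) (f : ∀ s, X s → B.car s)
    {Γ : List S} {s : S} (t : Tm Sg (CtxVar Γ) s)
    (as : ∀ i : Fin Γ.length, Tm Sg X (Γ.get i)) :
    Tm.extend B f (ctxInterp (termAlg Sg X) t as) =
      ctxInterp B t fun i => Tm.extend B f (as i) := by
  unfold ctxInterp
  refine (extend_extend B f _ t).trans ?_
  exact congrArg (fun v => Tm.extend (Sg := Sg) B v t)
    (funext fun s' => funext fun x =>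
      cast_apply' (F := (termAlg Sg X).car) (G := B.car)
        (fun s a => Tm.extend (Sg := Sg) B f a) x.2 (as x.1))

theorem hom_ctxInterp {B C : ClassAlg Sg} {h : ∀ s, B.car s → C.car s}
    (hh : IsClsHom B C h) {Γ : List S} {s : S} (t : Tm Sg (CtxVar Γ) s)
    (as : ∀ i : Fin Γ.length, B.car (Γ.get i)) :
    h s (ctxInterp B t as) = ctxInterp C t fun i => h _ (as i) := by
  unfold ctxInterp
  rw [hom_extend hh]
  exact congrArg (fun v => Tm.extend (Sg := Sg) C v t)
    (funext fun s' => funext fun x => cast_apply' (F := B.car) (G := C.car) h x.2 (as x.1))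

theorem congGen_isCong (B : ClassAlg Sg) (E' : Set (SynEq Sg)) :
    IsClsCong B (congGen B E') :=
  ⟨fun s => ⟨fun a r hr _ => (hr.1 s).refl a,
    fun h r hr hc => (hr.1 _).symm (h r hr hc),
    fun h1 h2 r hr hc => (hr.1 _).trans (h1 r hr hc) (h2 r hr hc)⟩,
   fun σ ts us h r hr hc => hr.2 σ ts us fun i => h i r hr hc⟩

theorem congGen_of_eqvGen (B : ClassAlg Sg) (E' : Set (SynEq Sg)) {s : S} {a b : B.car s}
    (h : Relation.EqvGen (congGen B E' s) a b) : congGen B E' s a b := by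
  induction h with
  | rel _ _ h => exact h
  | refl a => exact ((congGen_isCong B E').1 s).refl a
  | symm _ _ _ ih => exact ((congGen_isCong B E').1 s).symm ih
  | trans _ _ _ _ _ ih1 ih2 => exact ((congGen_isCong B E').1 s).trans ih1 ih2

theorem congGen_eqn (B : ClassAlg Sg) (E' : Set (SynEq Sg)) {e' : SynEq Sg} (he' : e' ∈ E')
    (as : ∀ i : Fin e'.ctx.length, B.car (e'.ctx.get i)) :
    congGen B E' e'.sort (ctxInterp B e'.lhs as) (ctxInterp B e'.rhs as) :=
  fun _ hr hc => hc e' he' as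

theorem out_rel (B : ClassAlg Sg) (E' : Set (SynEq Sg)) {s : S} (x : B.car s) :
    congGen B E' s (Quot.mk (congGen B E' s) x).out x :=
  congGen_of_eqvGen B E' (Quot.eqvGen_exact (Quot.out_eq _))

theorem extend_descent {X : S → Type u} (A : ClassAlg Sg) (E' : Set (SynEq Sg))
    (hA : ∀ e' ∈ E', ClsSat A e') (f : ∀ s, X s → A.car s) {s : S}
    {a b : Tm Sg X s} (h : congGen (termAlg Sg X) E' s a b) :
    Tm.extend A f a = Tm.extend A f b := by
  refine h (fun s a b => Tm.extend A f a = Tm.extend A f b)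
    ⟨fun s => ⟨fun _ => rfl, Eq.symm, Eq.trans⟩, ?_⟩ ?_
  · intro σ ts us hts
    show A.op σ (fun i => Tm.extend A f (ts i)) = A.op σ (fun i => Tm.extend A f (us i))
    exact congrArg (A.op σ) (funext hts)
  · intro e he as
    refine (extend_ctxInterp A f e.lhs as).trans (Eq.trans ?_ (extend_ctxInterp A f e.rhs as).symm)
    exact hA e he _

end Stmt12Aux

/-- `U^𝒯 : 𝒯-Alg → 𝒱^𝒮` has a left adjoint `F^𝒯` and the
adjunction `F^𝒯 ⊣ U^𝒯` is a lifting of `F^{|𝒯|} ⊣ U^{|𝒯|}`; in particular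
`|-|^𝒯 ∘ F^𝒯 = F^{|𝒯|} ∘ |-|^𝒮` strictly.  For each `𝒮`-sorted object `X`, the
free `𝒯`-algebra `F^𝒯 X` is the domain of the initial lift of the
`|-|^𝒯`-structured source of transposes `f^♯ : F^{|𝒯|}|X| → |A|^𝒯`; in
particular its carrier is the domain of the initial lift of the
`|-|^𝒮`-structured source `(f^♯ : Term_{|Σ|}(|X|)/∼^{|ℰ|} → |A|^𝒮)`. -/
theorem statement12 (V : TopConstruct.{u}) (M : MonStr V) {S : Type u} (Sg : VSig V S)
    (E : Set (AlgEq V M Sg)) (E' : Set (SynEq Sg.toClass))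
    (hE' : ∀ A : VAlg V M Sg, (∀ e ∈ E, VSat A e) ↔ ∀ e' ∈ E', ClsSat A.cls e')
    (X : S → V.Obj) :
    ∃ (ωT : ∀ s, V.Str (QCar V Sg E' X s))
      (qop : ∀ σ : Sg.Op,
        Sg.parC σ × (∀ i : Fin (Sg.ar σ).length, QCar V Sg E' X ((Sg.ar σ).get i)) →
          QCar V Sg E' X (Sg.out σ)),
      -- (i) strict lifting: the underlying classical algebra of `F^𝒯 X` is the
      -- free `|𝒯|`-algebra `F^{|𝒯|}|X|` (the quotient of the term algebra)
      (∀ (σ : Sg.Op) (p : Sg.parC σ) ts,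
        qop σ (p, fun i => Quot.mk _ (ts i)) =
          Quot.mk _ (Tm.app (Sg := Sg.toClass) ⟨σ, p⟩ ts)) ∧
      -- (ii) the operations are admissible
      (∀ σ : Sg.Op,
        V.Adm (M.tens (Sg.parS σ) (V.piStrF fun i => ωT ((Sg.ar σ).get i)))
          (ωT (Sg.out σ)) (qop σ)) ∧
      -- (iii) the unit `η : X → U^𝒯 F^𝒯 X` is admissible
      (∀ s, V.Adm (X s).2 (ωT s) fun x => Quot.mk _ (Tm.var x)) ∧
      -- (iv) `F^𝒯 X` is a `𝒯`-algebra (its underlying classical algebra is a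
      -- `|𝒯|`-algebra)
      (∀ e' ∈ E',
        ClsSat (⟨fun s => QCar V Sg E' X s, fun σ ts => qop σ.1 (σ.2, ts)⟩ :
          ClassAlg Sg.toClass) e') ∧
      -- (v) freeness: `F^𝒯 X` is the free `𝒯`-algebra on `X`
      (∀ A : VAlg V M Sg, (∀ e ∈ E, VSat A e) →
        ∀ f : ∀ s, (X s).1 → A.car s, (∀ s, V.Adm (X s).2 (A.str s) (f s)) →
        ∃! h : ∀ s, QCar V Sg E' X s → A.car s,
          (∀ s, V.Adm (ωT s) (A.str s) (h s)) ∧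
          (∀ (σ : Sg.Op) (p : Sg.parC σ) ts,
            h _ (qop σ (p, ts)) = A.op σ (p, fun i => h _ (ts i))) ∧
          ∀ s x, h s (Quot.mk _ (Tm.var x)) = f s x) ∧
      -- (vi) `F^𝒯 X` is the domain of the initial lift of the structured source
      -- of the transposes `f^♯` over all pairs `(A, f)` with `A` a `𝒯`-algebra
      (∀ H : ∀ q : FreeTSrc V M Sg E X, ∀ s, QCar V Sg E' X s → q.1.1.car s,
        (∀ q s t, H q s (Quot.mk _ t) = Tm.extend q.1.1.cls q.2.1 t) →
        ∀ s, ωT s = V.iLift (I := FreeTSrc V M Sg E X)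
          (fun q => q.1.1.car s) (fun q => q.1.1.str s) fun q => H q s) := by
  classical
  set T : ClassAlg Sg.toClass := termAlg Sg.toClass fun s => (X s).1 with hTdef
  have hsat : ∀ q : FreeTSrc V M Sg E X, ∀ e' ∈ E', ClsSat q.1.1.cls e' :=
    fun q => (hE' q.1.1).1 q.1.2
  let H0 : ∀ q : FreeTSrc V M Sg E X, ∀ s, QCar V Sg E' X s → q.1.1.car s :=
    fun q s => Quot.lift (Tm.extend q.1.1.cls q.2.1)
      (fun _ _ h => extend_descent q.1.1.cls E' (hsat q) q.2.1 h)
  let ωT : ∀ s, V.Str (QCar V Sg E' X s) :=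
    fun s => V.iLift (I := FreeTSrc V M Sg E X) (fun q => q.1.1.car s)
      (fun q => q.1.1.str s) fun q => H0 q s
  let qop : ∀ σ : Sg.Op,
      Sg.parC σ × (∀ i : Fin (Sg.ar σ).length, QCar V Sg E' X ((Sg.ar σ).get i)) →
        QCar V Sg E' X (Sg.out σ) :=
    fun σ pts =>
      Quot.mk _ (Tm.app (Sg := Sg.toClass) ⟨σ, pts.1⟩ fun i => (pts.2 i).out)
  have hH0out : ∀ (q : FreeTSrc V M Sg E X) (s : S) (x : QCar V Sg E' X s),
      Tm.extend q.1.1.cls q.2.1 x.out = H0 q s x :=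
    fun q s x => congrArg (H0 q s) (Quot.out_eq x)
  have hqopH0 : ∀ (q : FreeTSrc V M Sg E X) (σ : Sg.Op) (p : Sg.parC σ) ts,
      H0 q _ (qop σ (p, ts)) = q.1.1.op σ (p, fun i => H0 q _ (ts i)) := by
    intro q σ p ts
    show q.1.1.op σ (p, fun i => Tm.extend q.1.1.cls q.2.1 (ts i).out) = _
    exact congrArg (fun v => q.1.1.op σ (p, v)) (funext fun i => hH0out q _ (ts i))
  have hi : ∀ (σ : Sg.Op) (p : Sg.parC σ) ts,
      qop σ (p, fun i => Quot.mk _ (ts i)) =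
        Quot.mk _ (Tm.app (Sg := Sg.toClass) ⟨σ, p⟩ ts) := by
    intro σ p ts
    exact Quot.sound ((congGen_isCong T E').2 ⟨σ, p⟩ _ ts fun i => out_rel T E' (ts i))
  refine ⟨ωT, qop, hi, ?_, ?_, ?_, ?_, ?_⟩
  · -- (ii) admissibility of the operations
    intro σ
    apply V.iLift_initial
    intro q
    have heq : (fun pts => H0 q (Sg.out σ) (qop σ pts)) =
        fun pts : Sg.parC σ × (∀ i : Fin (Sg.ar σ).length, QCar V Sg E' X ((Sg.ar σ).get i)) =>
          q.1.1.op σ (pts.1, fun i => H0 q _ (pts.2 i)) :=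
      funext fun pts => hqopH0 q σ pts.1 pts.2
    rw [heq]
    have hpi : V.Adm (V.piStrF fun i => ωT ((Sg.ar σ).get i))
        (V.piStrF fun i => q.1.1.str ((Sg.ar σ).get i))
        (fun v i => H0 q _ (v i)) := by
      apply V.iLift_initial
      intro j
      exact V.adm_comp (V.iLift_adm _ _ _ j) (V.iLift_adm _ _ _ q)
    exact V.adm_comp (M.tens_adm (V.adm_id (Sg.parS σ)) hpi) (q.1.1.op_adm σ)
  · -- (iii) unit admissible
    intro s
    apply V.iLift_initial
    intro q
    exact q.2.2 s
  · -- (iv) equations hold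
    intro e' he' as
    have hmk : IsClsHom T
        (⟨fun s => QCar V Sg E' X s, fun σ ts => qop σ.1 (σ.2, ts)⟩ : ClassAlg Sg.toClass)
        (fun s => Quot.mk _) := by
      intro σ ts
      exact (hi σ.1 σ.2 ts).symm
    have key : ∀ t : Tm Sg.toClass (CtxVar e'.ctx) e'.sort,
        ctxInterp (⟨fun s => QCar V Sg E' X s, fun σ ts => qop σ.1 (σ.2, ts)⟩ :
            ClassAlg Sg.toClass) t as =
          Quot.mk _ (ctxInterp T t fun i => (as i).out) := by
      intro t
      refine Eq.trans ?_ (hom_ctxInterp hmk t (fun i => (as i).out)).symm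
      exact congrArg (fun v => ctxInterp
        (⟨fun s => QCar V Sg E' X s, fun σ ts => qop σ.1 (σ.2, ts)⟩ : ClassAlg Sg.toClass) t v)
        (funext fun i => (Quot.out_eq (as i)).symm)
    rw [key e'.lhs, key e'.rhs]
    exact Quot.sound (congGen_eqn T E' he' fun i => (as i).out)
  · -- (v) freeness
    intro A hA f hf
    let q0 : FreeTSrc V M Sg E X := ⟨⟨A, hA⟩, ⟨f, hf⟩⟩
    refine ⟨H0 q0, ⟨fun s => V.iLift_adm _ _ _ q0,
      fun σ p ts => hqopH0 q0 σ p ts, fun s x => rfl⟩, ?_⟩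
    rintro h' ⟨-, hop, hvar⟩
    funext s x
    refine @Quot.ind _ _ (fun x => h' s x = H0 q0 s x) (fun t => ?_) x
    show h' s (Quot.mk _ t) = H0 q0 s (Quot.mk _ t)
    clear x
    induction t with
    | var y => exact hvar _ y
    | app σp ts ih =>
        obtain ⟨σ1, p⟩ := σp
        have e1 : (Quot.mk (congGen T E' (Sg.out σ1)) (Tm.app (Sg := Sg.toClass) (Sigma.mk σ1 p) ts)) =
            qop σ1 (p, fun i => Quot.mk _ (ts i)) := (hi σ1 p ts).symm
        calc h' _ (Quot.mk (congGen T E' (Sg.out σ1)) (Tm.app (Sg := Sg.toClass) (Sigma.mk σ1 p) ts))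
            = h' _ (qop σ1 (p, fun i => Quot.mk _ (ts i))) := congrArg (h' _) e1
          _ = A.op σ1 (p, fun i => h' _ (Quot.mk _ (ts i))) := hop σ1 p _
          _ = A.op σ1 (p, fun i => H0 q0 _ (Quot.mk _ (ts i))) :=
              congrArg (fun v => A.op σ1 (p, v)) (funext fun i => ih i)
          _ = H0 q0 _ (Quot.mk (congGen T E' (Sg.out σ1)) (Tm.app (Sg := Sg.toClass) (Sigma.mk σ1 p) ts)) :=
              ((congrArg (H0 q0 _) e1).trans (hqopH0 q0 σ1 p _)).symm
  · -- (vi) initial lift characterization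
    intro H hH s
    have : (fun q : FreeTSrc V M Sg E X => H q s) = fun q => H0 q s :=
      funext fun q => funext fun x => @Quot.ind _ _ (fun x => H q s x = H0 q s x) (fun t => hH q s t) x
    rw [this]
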